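/- arXiv:2305.15449 — 3 statements merged into one kernel-verified Lean document; each statement's English description precedes it below -/
import Mathlib

section
/- Let N ≥ 3, p > 2, and let D, L > 0 with L ≥ sup_n ∫(A_∞ u_n² + B v_n² + |∇u_n|² + |∇v_n|² + u_n²|∇u_n|² + v_n²|∇v_n|²) and ∫|u_n|^α|v_n|^β ≥ D for all n. Set t̂ = (p L / D)^{1/(p-2)}, assumed > 1. Then for each n, I((u_n)_{t̂}, (v_n)_{t̂}) ≤ -L t̂^{N+2}/2 < 0. -/
open Real

/-- Step 3 of Lemma 3.4, upper bound for the fibering maximizer: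
with `aₙ = ∫(|∇uₙ|²+|∇vₙ|²)`, `bₙ = ∫(A(t̂x)uₙ²+Bvₙ²+uₙ²|∇uₙ|²+vₙ²|∇vₙ|²)`,
`dₙ = ∫|uₙ|^α|vₙ|^β`, if `aₙ + bₙ ≤ L` (since `A ≤ A_∞`), `dₙ ≥ D` and
`t̂ = (pL/D)^{1/(p-2)} > 1`, then
`I((uₙ)_{t̂},(vₙ)_{t̂}) = (t̂^N/2)aₙ + (t̂^{N+2}/2)bₙ - (2t̂^{N+p}/p)dₙ ≤ -Lt̂^{N+2}/2 < 0`. -/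
theorem stmt12 (N : ℕ) (hN : 3 ≤ N) (p : ℝ) (hp : 2 < p)
    (D L : ℝ) (hD : 0 < D) (hL : 0 < L)
    (a b d : ℕ → ℝ) (ha : ∀ n, 0 ≤ a n) (hb : ∀ n, 0 ≤ b n)
    (hQL : ∀ n, a n + b n ≤ L) (hd : ∀ n, D ≤ d n)
    (that : ℝ) (hthat : that = (p * L / D) ^ (1 / (p - 2))) (hthat1 : 1 < that) :
    ∀ n, that ^ (N : ℝ) / 2 * a n + that ^ ((N : ℝ) + 2) / 2 * b n
        - 2 * that ^ ((N : ℝ) + p) / p * d n ≤ -(L * that ^ ((N : ℝ) + 2)) / 2 ∧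
      -(L * that ^ ((N : ℝ) + 2)) / 2 < 0 := by
  intro n
  have hp0 : (0:ℝ) < p := by linarith
  have ht0 : (0:ℝ) < that := lt_trans one_pos hthat1
  have hpLD : (0:ℝ) < p * L / D := by positivity
  have hp2 : p - 2 ≠ 0 := by linarith
  have hkey : that ^ (p - 2) = p * L / D := by
    rw [hthat, ← Real.rpow_mul hpLD.le, one_div, inv_mul_cancel₀ hp2, Real.rpow_one]
  have hT2 : (0:ℝ) < that ^ ((N:ℝ) + 2) := Real.rpow_pos_of_pos ht0 _
  have hTN : (0:ℝ) < that ^ (N:ℝ) := Real.rpow_pos_of_pos ht0 _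
  have hmono : that ^ (N:ℝ) ≤ that ^ ((N:ℝ) + 2) :=
    Real.rpow_le_rpow_of_exponent_le hthat1.le (by linarith)
  have hsplit : that ^ ((N:ℝ) + p) = that ^ ((N:ℝ) + 2) * that ^ (p - 2) := by
    rw [← Real.rpow_add ht0]; ring_nf
  constructor
  · have h1 : that ^ (N:ℝ) / 2 * a n + that ^ ((N:ℝ) + 2) / 2 * b n
        ≤ that ^ ((N:ℝ) + 2) / 2 * L := by
      have := hQL n
      nlinarith [ha n, hb n, mul_le_mul_of_nonneg_right hmono (ha n)]
    have h2 : that ^ ((N:ℝ) + 2) * (2 * L) ≤ 2 * that ^ ((N:ℝ) + p) / p * d n := by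
      rw [hsplit, hkey]
      have hdn : D ≤ d n := hd n
      have : 2 * (that ^ ((N:ℝ) + 2) * (p * L / D)) / p * d n
          = that ^ ((N:ℝ) + 2) * (2 * L) * (d n / D) := by
        field_simp
      rw [this]
      have h3 : (1:ℝ) ≤ d n / D := (one_le_div hD).mpr hdn
      nlinarith [mul_le_mul_of_nonneg_left h3 (by positivity : (0:ℝ) ≤ that ^ ((N:ℝ) + 2) * (2 * L))]
    nlinarith [mul_pos hT2 hL]
  · have : (0:ℝ) < L * that ^ ((N:ℝ) + 2) := by positivity
    linarith
end

section
/- Let A : ℝ^N → ℝ be C¹ with A and ∇A(x)·x bounded, and suppose the map t ↦ I(u_t, v_t) with u_t(x) = t u(x/t) is defined for (u,v) ∈ X with all relevant integrals finite. Then h(t) = I(u_t, v_t) is C¹ on (0,∞) with h'(t) = (N/2)t^{N-1}∫(|∇u|²+|∇v|²) + ((N+2)/2)t^{N+1}∫(A(tx)u² + Bv² + u²|∇u|² + v²|∇v|²) + (t^{N+1}/2)∫∇A(tx)·(tx) u² - (2(N+α+β)/(α+β)) t^{N+α+β-1} ∫|u|^α|v|^β. In particular, h'(1) = G(u,v), where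 G is the Nehari–Pohožaev functional of the paper. -/
open Real MeasureTheory

lemma scale_hasFDerivAt {E : Type*} [NormedAddCommGroup E] [NormedSpace ℝ E]
    (u : E → ℝ) (hu : Differentiable ℝ u) {t : ℝ} (ht : t ≠ 0) (x : E) :
    HasFDerivAt (fun x => t * u (t⁻¹ • x)) (fderiv ℝ u (t⁻¹ • x)) x := by
  have h1 : HasFDerivAt (fun x : E => t⁻¹ • x) (t⁻¹ • ContinuousLinearMap.id ℝ E) x :=
    (hasFDerivAt_id x).const_smul t⁻¹
  have h2 := ((hu (t⁻¹ • x)).hasFDerivAt.comp x h1).const_smul t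
  exact h2.congr_fderiv (by ext v; simp [smul_smul, mul_inv_cancel₀ ht, smul_eq_mul, mul_inv_cancel_left₀ ht])

set_option maxHeartbeats 1000000 in
/-- the fibering map `h(t) = I(u_t,v_t)` is differentiable on `(0,∞)` with
the explicit derivative
`h'(t) = (N/2)t^{N-1}∫(|∇u|²+|∇v|²) + ((N+2)/2)t^{N+1}∫(A(tx)u²+Bv²+u²|∇u|²+v²|∇v|²)
 + (t^{N+1}/2)∫∇A(tx)·(tx)u² - (2(N+α+β)/(α+β))t^{N+α+β-1}∫|u|^α|v|^β`,
and in particular `h'(1) = G(u,v)`, the Nehari–Pohožaev functional. -/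
theorem stmt17 (N : ℕ) (hN : 3 ≤ N) (α β B : ℝ) (hα : 1 < α) (hβ : 1 < β) (hB : 0 < B)
    (A : EuclideanSpace ℝ (Fin N) → ℝ) (hA : ContDiff ℝ 1 A)
    (hAbdd : ∃ C : ℝ, ∀ x, |A x| ≤ C)
    (hA2 : ∃ C : ℝ, ∀ x, |fderiv ℝ A x x| ≤ C)
    (u v : EuclideanSpace ℝ (Fin N) → ℝ)
    (hu : Differentiable ℝ u) (hv : Differentiable ℝ v)
    (hi1 : Integrable (fun x => ‖fderiv ℝ u x‖ ^ 2 + ‖fderiv ℝ v x‖ ^ 2))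
    (hi2 : Integrable (fun x => u x ^ 2 + v x ^ 2))
    (hi3 : Integrable (fun x => u x ^ 2 * ‖fderiv ℝ u x‖ ^ 2
            + v x ^ 2 * ‖fderiv ℝ v x‖ ^ 2))
    (hi4 : Integrable (fun x => |u x| ^ α * |v x| ^ β))
    (I : (EuclideanSpace ℝ (Fin N) → ℝ) → (EuclideanSpace ℝ (Fin N) → ℝ) → ℝ)
    (hI : ∀ w z : EuclideanSpace ℝ (Fin N) → ℝ,
      I w z = ∫ x, ((1 / 2) * (‖fderiv ℝ w x‖ ^ 2 + ‖fderiv ℝ z x‖ ^ 2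
        + A x * w x ^ 2 + B * z x ^ 2
        + w x ^ 2 * ‖fderiv ℝ w x‖ ^ 2 + z x ^ 2 * ‖fderiv ℝ z x‖ ^ 2)
        - 2 / (α + β) * (|w x| ^ α * |z x| ^ β)))
    (h : ℝ → ℝ)
    (hh : ∀ t : ℝ, 0 < t →
      h t = I (fun x => t * u (t⁻¹ • x)) (fun x => t * v (t⁻¹ • x)))
    (G : ℝ)
    (hG : G = (N : ℝ) / 2 * (∫ x, ‖fderiv ℝ u x‖ ^ 2 + ‖fderiv ℝ v x‖ ^ 2)
      + ((N : ℝ) + 2) / 2 * (∫ x, A x * u x ^ 2 + B * v x ^ 2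
          + u x ^ 2 * ‖fderiv ℝ u x‖ ^ 2 + v x ^ 2 * ‖fderiv ℝ v x‖ ^ 2)
      + (1 / 2) * (∫ x, fderiv ℝ A x x * u x ^ 2)
      - 2 * ((N : ℝ) + α + β) / (α + β) * ∫ x, |u x| ^ α * |v x| ^ β) :
    (∀ t : ℝ, 0 < t → HasDerivAt h
      ((N : ℝ) / 2 * t ^ ((N : ℝ) - 1) * (∫ x, ‖fderiv ℝ u x‖ ^ 2 + ‖fderiv ℝ v x‖ ^ 2)
        + ((N : ℝ) + 2) / 2 * t ^ ((N : ℝ) + 1) * (∫ x, A (t • x) * u x ^ 2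
            + B * v x ^ 2 + u x ^ 2 * ‖fderiv ℝ u x‖ ^ 2
            + v x ^ 2 * ‖fderiv ℝ v x‖ ^ 2)
        + t ^ ((N : ℝ) + 1) / 2 * (∫ x, fderiv ℝ A (t • x) (t • x) * u x ^ 2)
        - 2 * ((N : ℝ) + α + β) / (α + β) * t ^ ((N : ℝ) + α + β - 1)
            * ∫ x, |u x| ^ α * |v x| ^ β) t) ∧
    deriv h 1 = G := by
  obtain ⟨CA, hCA⟩ := hAbdd
  obtain ⟨CA', hCA'⟩ := hA2
  have hCA'0 : 0 ≤ CA' := le_trans (abs_nonneg _) (hCA' 0)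
  have hcu : Continuous u := hu.continuous
  have hcv : Continuous v := hv.continuous
  have hmdu : Measurable fun x => ‖fderiv ℝ u x‖ ^ 2 :=
    ((measurable_fderiv ℝ u).norm).pow_const 2
  have hmdv : Measurable fun x => ‖fderiv ℝ v x‖ ^ 2 :=
    ((measurable_fderiv ℝ v).norm).pow_const 2
  -- basic integrability facts
  have int_u2 : Integrable fun x => u x ^ 2 := by
    refine hi2.mono' (hcu.pow 2).aestronglyMeasurable (.of_forall fun x => ?_)
    rw [Real.norm_eq_abs, abs_of_nonneg (sq_nonneg _)]
    nlinarith [sq_nonneg (v x)]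
  have int_v2 : Integrable fun x => v x ^ 2 := by
    refine hi2.mono' (hcv.pow 2).aestronglyMeasurable (.of_forall fun x => ?_)
    rw [Real.norm_eq_abs, abs_of_nonneg (sq_nonneg _)]
    nlinarith [sq_nonneg (u x)]
  have int_u2du : Integrable fun x => u x ^ 2 * ‖fderiv ℝ u x‖ ^ 2 := by
    refine hi3.mono' ((hcu.measurable.pow_const 2).mul hmdu).aestronglyMeasurable
      (.of_forall fun x => ?_)
    rw [Real.norm_eq_abs, abs_of_nonneg (by positivity)]
    nlinarith [mul_nonneg (sq_nonneg (v x)) (sq_nonneg ‖fderiv ℝ v x‖)]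
  have int_v2dv : Integrable fun x => v x ^ 2 * ‖fderiv ℝ v x‖ ^ 2 := by
    refine hi3.mono' ((hcv.measurable.pow_const 2).mul hmdv).aestronglyMeasurable
      (.of_forall fun x => ?_)
    rw [Real.norm_eq_abs, abs_of_nonneg (by positivity)]
    nlinarith [mul_nonneg (sq_nonneg (u x)) (sq_nonneg ‖fderiv ℝ u x‖)]
  have int_Au2 : ∀ t : ℝ, Integrable fun y => A (t • y) * u y ^ 2 := by
    intro t
    refine (int_u2.const_mul CA).mono'
      (((hA.continuous.comp (continuous_const_smul t)).mul (hcu.pow 2)).aestronglyMeasurable)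
      (.of_forall fun y => ?_)
    rw [Real.norm_eq_abs, abs_mul, abs_of_nonneg (sq_nonneg (u y))]
    exact mul_le_mul_of_nonneg_right (hCA _) (sq_nonneg _)
  set P : ℝ → EuclideanSpace ℝ (Fin N) → ℝ := fun t y =>
    A (t • y) * u y ^ 2 + B * v y ^ 2 + u y ^ 2 * ‖fderiv ℝ u y‖ ^ 2
      + v y ^ 2 * ‖fderiv ℝ v y‖ ^ 2 with hPdef
  have int_P : ∀ t : ℝ, Integrable (P t) := fun t =>
    (((int_Au2 t).add (int_v2.const_mul B)).add int_u2du).add int_v2dv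
  set S1 : ℝ := ∫ x, ‖fderiv ℝ u x‖ ^ 2 + ‖fderiv ℝ v x‖ ^ 2 with hS1
  set S3 : ℝ := ∫ x, |u x| ^ α * |v x| ^ β with hS3
  -- Step A: explicit formula for h on (0,∞)
  have key : ∀ t : ℝ, 0 < t →
      h t = 1 / 2 * t ^ (N : ℝ) * S1 + 1 / 2 * t ^ ((N : ℝ) + 2) * (∫ y, P t y)
        - 2 / (α + β) * t ^ ((N : ℝ) + α + β) * S3 := by
    intro t ht
    have htne : t ≠ 0 := ne_of_gt ht
    have hdu : ∀ x : EuclideanSpace ℝ (Fin N),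
        fderiv ℝ (fun x => t * u (t⁻¹ • x)) x = fderiv ℝ u (t⁻¹ • x) :=
      fun x => (scale_hasFDerivAt u hu htne x).fderiv
    have hdv : ∀ x : EuclideanSpace ℝ (Fin N),
        fderiv ℝ (fun x => t * v (t⁻¹ • x)) x = fderiv ℝ v (t⁻¹ • x) :=
      fun x => (scale_hasFDerivAt v hv htne x).fderiv
    have habs : ∀ y : EuclideanSpace ℝ (Fin N),
        |t * u y| ^ α * |t * v y| ^ β = t ^ (α + β) * (|u y| ^ α * |v y| ^ β) := by
      intro y
      rw [abs_mul, abs_mul, abs_of_pos ht, Real.mul_rpow ht.le (abs_nonneg _),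
        Real.mul_rpow ht.le (abs_nonneg _), Real.rpow_add ht]
      ring
    set ψ : EuclideanSpace ℝ (Fin N) → ℝ := fun y =>
      1 / 2 * (‖fderiv ℝ u y‖ ^ 2 + ‖fderiv ℝ v y‖ ^ 2) + t ^ 2 / 2 * P t y
        - 2 / (α + β) * t ^ (α + β) * (|u y| ^ α * |v y| ^ β) with hψdef
    have hsmul : ∀ x : EuclideanSpace ℝ (Fin N), t • (t⁻¹ • x) = x := by
      intro x; rw [smul_smul, mul_inv_cancel₀ htne, one_smul]
    calc h t = ∫ x, ψ (t⁻¹ • x) := by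
          rw [hh t ht, hI]
          congr 1
          funext x
          simp only [hdu, hdv, hψdef, hPdef, hsmul, habs]
          ring
      _ = |t ^ (Module.finrank ℝ (EuclideanSpace ℝ (Fin N)))| • ∫ y, ψ y :=
          MeasureTheory.Measure.integral_comp_inv_smul volume ψ t
      _ = 1 / 2 * t ^ (N : ℝ) * S1 + 1 / 2 * t ^ ((N : ℝ) + 2) * (∫ y, P t y)
            - 2 / (α + β) * t ^ ((N : ℝ) + α + β) * S3 := by
          have hint1 : Integrable fun y =>
              1 / 2 * (‖fderiv ℝ u y‖ ^ 2 + ‖fderiv ℝ v y‖ ^ 2) := hi1.const_mul _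
          have hint2 : Integrable fun y => t ^ 2 / 2 * P t y := (int_P t).const_mul _
          have hint3 : Integrable fun y =>
              2 / (α + β) * t ^ (α + β) * (|u y| ^ α * |v y| ^ β) := hi4.const_mul _
          have hsplit : (∫ y, ψ y) = 1 / 2 * S1 + t ^ 2 / 2 * (∫ y, P t y)
              - 2 / (α + β) * t ^ (α + β) * S3 := by
            simp only [hψdef, hS1, hS3]
            have hint12 : Integrable (fun y =>
                1 / 2 * (‖fderiv ℝ u y‖ ^ 2 + ‖fderiv ℝ v y‖ ^ 2) + t ^ 2 / 2 * P t y)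
                volume := hint1.add hint2
            rw [integral_sub hint12 hint3, integral_add hint1 hint2,
              MeasureTheory.integral_const_mul, MeasureTheory.integral_const_mul,
              MeasureTheory.integral_const_mul]
          rw [hsplit, finrank_euclideanSpace_fin, abs_of_pos (pow_pos ht N), smul_eq_mul]
          have e1 : t ^ ((N : ℝ) + 2) = t ^ (N : ℝ) * t ^ 2 := by
            rw [Real.rpow_add ht, Real.rpow_two]
          have e2 : t ^ ((N : ℝ) + α + β) = t ^ (N : ℝ) * t ^ (α + β) := by
            rw [add_assoc, Real.rpow_add ht]
          have e3 : t ^ N = t ^ (N : ℝ) := (Real.rpow_natCast t N).symm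
          rw [e1, e2, e3]
          ring
  -- Step B: differentiability of t ↦ ∫ P t
  have hK : ∀ t₀ : ℝ, 0 < t₀ → HasDerivAt (fun t => ∫ y, P t y)
      (∫ y, fderiv ℝ A (t₀ • y) y * u y ^ 2) t₀ := by
    intro t₀ ht₀
    have hε : 0 < t₀ / 2 := half_pos ht₀
    have meas_P : ∀ t : ℝ, AEStronglyMeasurable (P t) volume := by
      intro t
      refine Measurable.aestronglyMeasurable ?_
      simp only [hPdef]
      exact ((((hA.continuous.comp (continuous_const_smul t)).measurable.mul
        (hcu.measurable.pow_const 2)).add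
        ((measurable_const.mul (hcv.measurable.pow_const 2)))).add
        ((hcu.measurable.pow_const 2).mul hmdu)).add
        ((hcv.measurable.pow_const 2).mul hmdv)
    have meas_F' : AEStronglyMeasurable
        (fun y => fderiv ℝ A (t₀ • y) y * u y ^ 2) volume := by
      refine Continuous.aestronglyMeasurable ?_
      exact (((hA.continuous_fderiv one_ne_zero).comp (continuous_const_smul t₀)).clm_apply
        continuous_id).mul (hcu.pow 2)
    have h_bound : ∀ᵐ y : EuclideanSpace ℝ (Fin N), ∀ t ∈ Metric.ball t₀ (t₀ / 2),
        ‖fderiv ℝ A (t • y) y * u y ^ 2‖ ≤ CA' / (t₀ / 2) * u y ^ 2 := by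
      refine .of_forall fun y t htball => ?_
      rw [Metric.mem_ball, Real.dist_eq] at htball
      have htlb : t₀ / 2 < t := by
        have := abs_lt.1 htball
        linarith [this.1]
      have htpos : 0 < t := lt_trans hε htlb
      have hz : t * |fderiv ℝ A (t • y) y| ≤ CA' := by
        have hmap : fderiv ℝ A (t • y) (t • y) = t * fderiv ℝ A (t • y) y := by
          rw [(fderiv ℝ A (t • y)).map_smul, smul_eq_mul]
        have := hCA' (t • y)
        rw [hmap, abs_mul, abs_of_pos htpos] at this
        exact this
      have hb : |fderiv ℝ A (t • y) y| ≤ CA' / (t₀ / 2) := by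
        rw [le_div_iff₀ hε]
        nlinarith [abs_nonneg (fderiv ℝ A (t • y) y)]
      rw [Real.norm_eq_abs, abs_mul, abs_of_nonneg (sq_nonneg (u y))]
      exact mul_le_mul_of_nonneg_right hb (sq_nonneg _)
    have h_diff : ∀ᵐ y : EuclideanSpace ℝ (Fin N), ∀ t ∈ Metric.ball t₀ (t₀ / 2),
        HasDerivAt (fun t => P t y) (fderiv ℝ A (t • y) y * u y ^ 2) t := by
      refine .of_forall fun y t _ => ?_
      have h1 : HasDerivAt (fun t : ℝ => t • y) y t := by
        simpa using (hasDerivAt_id t).smul_const y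
      have hAt : HasDerivAt (fun t : ℝ => A (t • y)) (fderiv ℝ A (t • y) y) t :=
        (hA.differentiable one_ne_zero (t • y)).hasFDerivAt.comp_hasDerivAt t h1
      simpa only [hPdef] using
        (((hAt.mul_const (u y ^ 2)).add_const (B * v y ^ 2)).add_const
          (u y ^ 2 * ‖fderiv ℝ u y‖ ^ 2)).add_const (v y ^ 2 * ‖fderiv ℝ v y‖ ^ 2)
    exact (hasDerivAt_integral_of_dominated_loc_of_deriv_le (Metric.ball_mem_nhds t₀ hε)
      (.of_forall meas_P) (int_P t₀) meas_F' h_bound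
      (int_u2.const_mul (CA' / (t₀ / 2))) h_diff).2
  -- Step C: assemble
  have main : ∀ t : ℝ, 0 < t → HasDerivAt h
      ((N : ℝ) / 2 * t ^ ((N : ℝ) - 1) * (∫ x, ‖fderiv ℝ u x‖ ^ 2 + ‖fderiv ℝ v x‖ ^ 2)
        + ((N : ℝ) + 2) / 2 * t ^ ((N : ℝ) + 1) * (∫ x, A (t • x) * u x ^ 2
            + B * v x ^ 2 + u x ^ 2 * ‖fderiv ℝ u x‖ ^ 2
            + v x ^ 2 * ‖fderiv ℝ v x‖ ^ 2)
        + t ^ ((N : ℝ) + 1) / 2 * (∫ x, fderiv ℝ A (t • x) (t • x) * u x ^ 2)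
        - 2 * ((N : ℝ) + α + β) / (α + β) * t ^ ((N : ℝ) + α + β - 1)
            * ∫ x, |u x| ^ α * |v x| ^ β) t := by
    intro t₀ ht₀
    have ht₀ne : t₀ ≠ 0 := ne_of_gt ht₀
    have d1 : HasDerivAt (fun t : ℝ => t ^ (N : ℝ)) ((N : ℝ) * t₀ ^ ((N : ℝ) - 1)) t₀ :=
      Real.hasDerivAt_rpow_const (Or.inl ht₀ne)
    have d2 : HasDerivAt (fun t : ℝ => t ^ ((N : ℝ) + 2))
        (((N : ℝ) + 2) * t₀ ^ ((N : ℝ) + 2 - 1)) t₀ :=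
      Real.hasDerivAt_rpow_const (Or.inl ht₀ne)
    rw [show (N : ℝ) + 2 - 1 = (N : ℝ) + 1 by ring] at d2
    have d3 : HasDerivAt (fun t : ℝ => t ^ ((N : ℝ) + α + β))
        (((N : ℝ) + α + β) * t₀ ^ ((N : ℝ) + α + β - 1)) t₀ :=
      Real.hasDerivAt_rpow_const (Or.inl ht₀ne)
    have dK := hK t₀ ht₀
    have dH := (((d1.const_mul (1 / 2)).mul_const S1).add
        ((d2.const_mul (1 / 2)).mul dK)).sub
        ((d3.const_mul (2 / (α + β))).mul_const S3)
    have heq : h =ᶠ[nhds t₀] fun t : ℝ => 1 / 2 * t ^ (N : ℝ) * S1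
        + 1 / 2 * t ^ ((N : ℝ) + 2) * (∫ y, P t y)
        - 2 / (α + β) * t ^ ((N : ℝ) + α + β) * S3 := by
      filter_upwards [Ioi_mem_nhds ht₀] with t ht using key t ht
    have dh := dH.congr_of_eventuallyEq heq
    have hrw : (∫ x, fderiv ℝ A (t₀ • x) (t₀ • x) * u x ^ 2)
        = t₀ * ∫ y, fderiv ℝ A (t₀ • y) y * u y ^ 2 := by
      rw [← MeasureTheory.integral_const_mul]
      congr 1
      funext x
      rw [(fderiv ℝ A (t₀ • x)).map_smul, smul_eq_mul]
      ring
    have hpow : t₀ ^ ((N : ℝ) + 2) = t₀ ^ ((N : ℝ) + 1) * t₀ := by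
      rw [show (N : ℝ) + 2 = ((N : ℝ) + 1) + 1 by ring, Real.rpow_add_one ht₀ne]
    refine dh.congr_deriv ?_
    simp only [hPdef, hS1, hS3]
    rw [hrw, hpow]
    ring
  refine ⟨main, ?_⟩
  have d1 := (main 1 one_pos).deriv
  rw [d1, hG]
  simp only [one_smul, Real.one_rpow, hS1, hS3]
  ring
end

section
/- Let N ≥ 3, p = α+β ∈ (2, 4N/(N-2)), and A₀, B > 0 constants. Suppose (u,v) ∈ X satisfies the constraint ((N+2)/2)∫(A₀u² + Bv² + u²|∇u|² + v²|∇v|²) ≤ (2(N+p)/p)∫|u|^α|v|^β. Then, combining Hölder, Young, the L²–L^{4N/(N-2)} interpolation inequality and Young's inequality with appropriate weights, there exists C > 0 (depending on N, α, β, A₀, B) such that ((N+2)/2)∫(u²|∇u|² + v²|∇v|²) ≤ C ∫(|u|^{4N/(N-2)} + |v|^{4N/(N-2)}). -/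
open Real MeasureTheory

lemma aux_tpow (p q t : ℝ) (hp : 2 ≤ p) (hq : p ≤ q) (ht : 0 ≤ t) :
    t ^ p ≤ t ^ (2:ℝ) + t ^ q := by
  rcases le_or_gt t 1 with h | h
  · rcases eq_or_lt_of_le ht with h0 | h0
    · rw [← h0, Real.zero_rpow (ne_of_gt (show (0:ℝ) < p by linarith)),
        Real.zero_rpow (ne_of_gt (show (0:ℝ) < q by linarith)),
        Real.zero_rpow (by norm_num)]
      norm_num
    · have h1 : t ^ p ≤ t ^ (2:ℝ) := Real.rpow_le_rpow_of_exponent_ge h0 h hp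
      have h2 : (0:ℝ) ≤ t ^ q := Real.rpow_nonneg ht q
      linarith
  · have h1 : t ^ p ≤ t ^ q := Real.rpow_le_rpow_of_exponent_le h.le hq
    have h2 : (0:ℝ) ≤ t ^ (2:ℝ) := Real.rpow_nonneg ht _
    linarith

lemma aux_pow (p q M x : ℝ) (hp : 2 ≤ p) (hq : p ≤ q) (hM : 0 < M) (hx : 0 ≤ x) :
    x ^ p ≤ M ^ (2 - p) * x ^ (2:ℝ) + M ^ (q - p) * x ^ q := by
  have key := aux_tpow p q (M * x) hp hq (by positivity)
  rw [Real.mul_rpow hM.le hx, Real.mul_rpow hM.le hx, Real.mul_rpow hM.le hx] at key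
  have hMp : 0 < M ^ p := Real.rpow_pos_of_pos hM p
  rw [Real.rpow_sub hM, Real.rpow_sub hM]
  rw [div_mul_eq_mul_div, div_mul_eq_mul_div, ← add_div, le_div_iff₀ hMp]
  linarith [key]

/-- chain of inequalities in Lemma 2.3: there is a constant `C > 0`
depending only on `N, α, β, A₀, B` such that for every `(u,v)` satisfying the
constraint inequality
`((N+2)/2)∫(A₀u²+Bv²+u²|∇u|²+v²|∇v|²) ≤ (2(N+p)/p)∫|u|^α|v|^β`,
one has `((N+2)/2)∫(u²|∇u|²+v²|∇v|²) ≤ C∫(|u|^{4N/(N-2)}+|v|^{4N/(N-2)})`. -/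
theorem stmt18 (N : ℕ) (hN : 3 ≤ N) (α β : ℝ) (hα : 1 < α) (hβ : 1 < β)
    (p : ℝ) (hpdef : p = α + β) (hp : 2 < p) (hp' : p < 4 * N / ((N : ℝ) - 2))
    (A₀ B : ℝ) (hA₀ : 0 < A₀) (hB : 0 < B) :
    ∃ C : ℝ, 0 < C ∧
      ∀ u v : EuclideanSpace ℝ (Fin N) → ℝ,
        Differentiable ℝ u → Differentiable ℝ v →
        Integrable (fun x => u x ^ 2) → Integrable (fun x => v x ^ 2) →
        Integrable (fun x => u x ^ 2 * ‖fderiv ℝ u x‖ ^ 2) →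
        Integrable (fun x => v x ^ 2 * ‖fderiv ℝ v x‖ ^ 2) →
        Integrable (fun x => |u x| ^ α * |v x| ^ β) →
        Integrable (fun x => |u x| ^ p) → Integrable (fun x => |v x| ^ p) →
        Integrable (fun x => |u x| ^ (4 * N / ((N : ℝ) - 2))) →
        Integrable (fun x => |v x| ^ (4 * N / ((N : ℝ) - 2))) →
        ((N : ℝ) + 2) / 2 * (∫ x, A₀ * u x ^ 2 + B * v x ^ 2
            + u x ^ 2 * ‖fderiv ℝ u x‖ ^ 2 + v x ^ 2 * ‖fderiv ℝ v x‖ ^ 2)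
          ≤ 2 * ((N : ℝ) + p) / p * ∫ x, |u x| ^ α * |v x| ^ β →
        ((N : ℝ) + 2) / 2 * (∫ x, u x ^ 2 * ‖fderiv ℝ u x‖ ^ 2
            + v x ^ 2 * ‖fderiv ℝ v x‖ ^ 2)
          ≤ C * ∫ x, |u x| ^ (4 * N / ((N : ℝ) - 2))
              + |v x| ^ (4 * N / ((N : ℝ) - 2)) := by
  have hNR : (3:ℝ) ≤ (N:ℝ) := by exact_mod_cast hN
  set q : ℝ := 4 * N / ((N : ℝ) - 2) with hqdef
  have hpq : p ≤ q := hp'.le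
  have hK : (0:ℝ) < 2 * ((N : ℝ) + p) / p := by positivity
  set K : ℝ := 2 * ((N : ℝ) + p) / p with hKdef
  set δ : ℝ := min (((N:ℝ) + 2) / 2 * A₀) (((N:ℝ) + 2) / 2 * B) with hδdef
  have hδ : 0 < δ := lt_min (by positivity) (by positivity)
  set ε : ℝ := min 1 (δ / K) with hεdef
  have hε : 0 < ε := lt_min one_pos (by positivity)
  have hKε : K * ε ≤ δ := by
    have h1 : ε ≤ δ / K := min_le_right _ _
    calc K * ε ≤ K * (δ / K) := mul_le_mul_of_nonneg_left h1 hK.le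
      _ = δ := by field_simp
  have hεA : K * ε ≤ ((N:ℝ) + 2) / 2 * A₀ := hKε.trans (min_le_left _ _)
  have hεB : K * ε ≤ ((N:ℝ) + 2) / 2 * B := hKε.trans (min_le_right _ _)
  set M : ℝ := ε ^ ((2 - p)⁻¹) with hMdef
  have hM : 0 < M := Real.rpow_pos_of_pos hε _
  have hMε : M ^ (2 - p) = ε := by
    rw [hMdef, ← Real.rpow_mul hε.le,
      inv_mul_cancel₀ (by intro h; rw [sub_eq_zero] at h; linarith), Real.rpow_one]
  refine ⟨K * M ^ (q - p), by positivity, ?_⟩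
  intro u v hud hvd hiu2 hiv2 hiwu hiwv hiab hiup hivp hiuq hivq Hcon
  set c : ℝ := M ^ (q - p) with hcdef
  -- split the big integral in the constraint
  have iA : Integrable (fun x => A₀ * u x ^ 2) := hiu2.const_mul A₀
  have iB : Integrable (fun x => B * v x ^ 2) := hiv2.const_mul B
  have i12 : Integrable (fun x => A₀ * u x ^ 2 + B * v x ^ 2) := iA.add iB
  have i123 : Integrable (fun x => A₀ * u x ^ 2 + B * v x ^ 2
      + u x ^ 2 * ‖fderiv ℝ u x‖ ^ 2) := i12.add hiwu
  rw [integral_add i123 hiwv, integral_add i12 hiwu, integral_add iA iB,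
    integral_const_mul _ _, integral_const_mul _ _] at Hcon
  rw [integral_add hiwu hiwv, integral_add hiuq hivq]
  set Iu2 := ∫ x, u x ^ 2
  set Iv2 := ∫ x, v x ^ 2
  set Iwu := ∫ x, u x ^ 2 * ‖fderiv ℝ u x‖ ^ 2
  set Iwv := ∫ x, v x ^ 2 * ‖fderiv ℝ v x‖ ^ 2
  set Iab := ∫ x, |u x| ^ α * |v x| ^ β
  set Iup := ∫ x, |u x| ^ p
  set Ivp := ∫ x, |v x| ^ p
  set Iuq := ∫ x, |u x| ^ q
  set Ivq := ∫ x, |v x| ^ q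
  have hIu2 : 0 ≤ Iu2 := integral_nonneg fun x => by positivity
  have hIv2 : 0 ≤ Iv2 := integral_nonneg fun x => by positivity
  -- pointwise Young: |u|^α |v|^β ≤ |u|^p + |v|^p
  have hptA : ∀ x, |u x| ^ α * |v x| ^ β ≤ |u x| ^ p + |v x| ^ p := by
    intro x
    have ha : (0:ℝ) ≤ |u x| := abs_nonneg _
    have hb : (0:ℝ) ≤ |v x| := abs_nonneg _
    have hmnn : (0:ℝ) ≤ max |u x| |v x| := le_trans ha (le_max_left _ _)
    have h1 : |u x| ^ α * |v x| ^ β ≤ max |u x| |v x| ^ α * max |u x| |v x| ^ β :=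
      mul_le_mul (Real.rpow_le_rpow ha (le_max_left _ _) (by linarith))
        (Real.rpow_le_rpow hb (le_max_right _ _) (by linarith))
        (Real.rpow_nonneg hb β) (Real.rpow_nonneg hmnn α)
    have h2 : max |u x| |v x| ^ α * max |u x| |v x| ^ β = max |u x| |v x| ^ p := by
      rw [hpdef, Real.rpow_add' hmnn (by rw [← hpdef]; intro h; rw [h] at hp; linarith)]
    have h3 : max |u x| |v x| ^ p ≤ |u x| ^ p + |v x| ^ p := by
      rcases max_choice |u x| |v x| with h | h <;> rw [h]
      · exact le_add_of_nonneg_right (Real.rpow_nonneg hb p)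
      · exact le_add_of_nonneg_left (Real.rpow_nonneg ha p)
    calc |u x| ^ α * |v x| ^ β ≤ max |u x| |v x| ^ p := h2 ▸ h1
      _ ≤ _ := h3
  -- pointwise interpolation
  have habs2 : ∀ t : ℝ, |t| ^ (2:ℝ) = t ^ 2 := by
    intro t
    rw [show (2:ℝ) = ((2:ℕ):ℝ) by norm_num, Real.rpow_natCast, sq_abs]
  have hptu : ∀ x, |u x| ^ p ≤ ε * u x ^ 2 + c * |u x| ^ q := by
    intro x
    have h := aux_pow p q M |u x| hp.le hpq hM (abs_nonneg _)
    rwa [hMε, habs2] at h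
  have hptv : ∀ x, |v x| ^ p ≤ ε * v x ^ 2 + c * |v x| ^ q := by
    intro x
    have h := aux_pow p q M |v x| hp.le hpq hM (abs_nonneg _)
    rwa [hMε, habs2] at h
  -- integrate
  have hIab : Iab ≤ Iup + Ivp := by
    have h := integral_mono hiab (hiup.add hivp) hptA
    simp only [Pi.add_apply] at h
    rwa [integral_add hiup hivp] at h
  have iεu : Integrable (fun x => ε * u x ^ 2) := hiu2.const_mul ε
  have icu : Integrable (fun x => c * |u x| ^ q) := hiuq.const_mul c
  have iεv : Integrable (fun x => ε * v x ^ 2) := hiv2.const_mul ε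
  have icv : Integrable (fun x => c * |v x| ^ q) := hivq.const_mul c
  have hIu : Iup ≤ ε * Iu2 + c * Iuq := by
    have h := integral_mono hiup (iεu.add icu) hptu
    simp only [Pi.add_apply] at h
    rwa [integral_add iεu icu, integral_const_mul _ _, integral_const_mul _ _] at h
  have hIv : Ivp ≤ ε * Iv2 + c * Ivq := by
    have h := integral_mono hivp (iεv.add icv) hptv
    simp only [Pi.add_apply] at h
    rwa [integral_add iεv icv, integral_const_mul _ _, integral_const_mul _ _] at h
  -- combine
  have f1 : K * Iab ≤ K * (Iup + Ivp) := mul_le_mul_of_nonneg_left hIab hK.le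
  have f2 : K * Iup ≤ K * (ε * Iu2 + c * Iuq) := mul_le_mul_of_nonneg_left hIu hK.le
  have f3 : K * Ivp ≤ K * (ε * Iv2 + c * Ivq) := mul_le_mul_of_nonneg_left hIv hK.le
  have f4 : K * ε * Iu2 ≤ ((N:ℝ) + 2) / 2 * A₀ * Iu2 :=
    mul_le_mul_of_nonneg_right hεA hIu2
  have f5 : K * ε * Iv2 ≤ ((N:ℝ) + 2) / 2 * B * Iv2 :=
    mul_le_mul_of_nonneg_right hεB hIv2
  linarith [Hcon, f1, f2, f3, f4, f5]
end
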